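/- Let q be a power of an odd prime p, let F be a finite field with q elements, and set P(X) = X^{2q-1} + 1 - (X+1)^{2q-1} ∈ F[X]. Then for every α ∈ F with α ≠ 0 and α ≠ -1, the polynomial (X - α)^2 divides P(X) in F[X]. -/
import Mathlib


open Polynomial

/-- For `F` a finite field with `q = p^f` elements (`p` an odd prime) and
`P(X) = X^(2q-1) + 1 - (X+1)^(2q-1) ∈ F[X]`, for every `α ∈ F` with `α ≠ 0`, `α ≠ -1`,
the polynomial `(X - α)^2` divides `P(X)`. -/
theorem sq_dvd_P
    (p f : ℕ) (hp : p.Prime) (hodd : Odd p) (hf : 0 < f)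
    (F : Type) [Field F] [Fintype F] (hF : Fintype.card F = p ^ f)
    (α : F) (hα0 : α ≠ 0) (hα1 : α ≠ -1) :
    (X - C α) ^ 2 ∣
      ((X : F[X]) ^ (2 * p ^ f - 1) + 1 - (X + 1) ^ (2 * p ^ f - 1)) := by
  set q := p ^ f with hq
  set P : F[X] := (X : F[X]) ^ (2 * q - 1) + 1 - (X + 1) ^ (2 * q - 1) with hP
  have hq1 : 1 ≤ q := Nat.one_le_iff_ne_zero.2 (pow_ne_zero f hp.pos.ne')
  by_cases hP0 : P = 0
  · rw [hP0]; exact dvd_zero _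
  have hα1' : α + 1 ≠ 0 := fun h => hα1 (eq_neg_of_add_eq_zero_left h)
  have hpow1 : ∀ x : F, x ≠ 0 → x ^ (q - 1) = 1 := by
    intro x hx
    have := FiniteField.pow_card_sub_one_eq_one x hx
    rwa [hF] at this
  have hpow : ∀ x : F, x ≠ 0 → x ^ (2 * q - 1) = x := by
    intro x hx
    have h2 : 2 * q - 1 = (q - 1) + q := by omega
    have hc : x ^ q = x := by have := FiniteField.pow_card x; rwa [hF] at this
    rw [h2, pow_add, hpow1 x hx, one_mul, hc]
  have hpow2 : ∀ x : F, x ≠ 0 → x ^ (2 * q - 2) = 1 := by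
    intro x hx
    have h2 : 2 * q - 2 = (q - 1) * 2 := by omega
    rw [h2, pow_mul, hpow1 x hx, one_pow]
  have h0 : P.IsRoot α := by
    simp only [hP, IsRoot, eval_sub, eval_add, eval_pow, eval_X, eval_one]
    rw [hpow α hα0, hpow (α + 1) hα1']
    ring
  have h1 : (derivative P).IsRoot α := by
    have hd : derivative P = (C ((2 * q - 1 : ℕ) : F)) * X ^ (2 * q - 2)
        - (C ((2 * q - 1 : ℕ) : F)) * (X + 1) ^ (2 * q - 2) := by
      simp only [hP, derivative_sub, derivative_add, derivative_pow, derivative_X,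
        derivative_one, mul_one, add_zero, map_natCast]
      rw [show 2 * q - 1 - 1 = 2 * q - 2 by omega]
    simp only [IsRoot, hd, eval_sub, eval_mul, eval_C, eval_pow, eval_X, eval_add, eval_one]
    rw [hpow2 α hα0, hpow2 (α + 1) hα1']
    ring
  have h2 : 1 < P.rootMultiplicity α :=
    (Polynomial.one_lt_rootMultiplicity_iff_isRoot hP0).2 ⟨h0, h1⟩
  exact dvd_trans (pow_dvd_pow _ h2) (P.pow_rootMultiplicity_dvd α)
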